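/- Let H₁, H₂, K₁, K₂ be closed subspaces of L² and a₁, a₂ ∈ 𝒢L∞ with a₁K₁ = H₁ and a₂K₂ = H₂. If φ, ψ ∈ L∞ satisfy φ = ā₂·ψ·a₁, then T_φ^{K₁,K₂} = E ∘ T_ψ^{H₁,H₂} ∘ F, where E = T_{ā₂}^{H₂,K₂} and F = T_{a₁}^{K₁,H₁} = M_{a₁}|_{K₁}; in particular, E and F are bounded invertible, so T_φ^{K₁,K₂} and T_ψ^{H₁,H₂} are equivalent. -/

import Mathlib

open MeasureTheory

noncomputable section

/-! ## Setup: the circle, L², L∞, multiplication operators, Hardy space,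
model spaces, and generalized Toeplitz operators -/

instance : Fact (0 < 2 * Real.pi) := ⟨by positivity⟩

/-- The normalized Lebesgue (Haar) measure `dθ/2π` on the circle. -/
abbrev μH : Measure (AddCircle (2 * Real.pi)) := AddCircle.haarAddCircle

/-- The Lebesgue space `L²` of the circle. -/
abbrev L2 : Type := Lp ℂ 2 μH

/-- The space `L∞` of essentially bounded functions on the circle. -/
abbrev Linf : Type := Lp ℂ ⊤ μH

/-- Pointwise (a.e.) multiplication on `L∞`. -/
instance : Mul Linf :=
  ⟨fun f g => ((Lp.memLp g).smul (p := ⊤) (r := ⊤) (Lp.memLp f)).toLp (⇑f • ⇑g)⟩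

/-- The constant function `1` as an element of `L∞`. -/
instance : One Linf := ⟨(memLp_const (1 : ℂ)).toLp (fun _ => (1 : ℂ))⟩

/-- Complex conjugation on `L∞`. -/
instance : Star Linf :=
  ⟨fun f => ((Complex.conjCLE.toContinuousLinearMap).comp_memLp' (Lp.memLp f)).toLp
    ((starRingEnd ℂ) ∘ ⇑f)⟩

/-- Multiplication of an `L²` function by an `L∞` function. -/
def mulFun (φ : Linf) (f : L2) : L2 :=
  ((Lp.memLp f).smul (p := ⊤) (r := 2) (Lp.memLp φ)).toLp (⇑φ • ⇑f)

lemma mulFun_coe (φ : Linf) (f : L2) : mulFun φ f =ᵐ[μH] ⇑φ • ⇑f :=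
  MemLp.coeFn_toLp _

lemma mulFun_norm_le (φ : Linf) (f : L2) : ‖mulFun φ f‖ ≤ ‖φ‖ * ‖f‖ := by
  rw [mulFun, Lp.norm_toLp, Lp.norm_def, Lp.norm_def, ← ENNReal.toReal_mul]
  refine ENNReal.toReal_mono ?_ ?_
  · exact ENNReal.mul_ne_top (Lp.eLpNorm_ne_top φ) (Lp.eLpNorm_ne_top f)
  · exact eLpNorm_smul_le_eLpNorm_top_mul_eLpNorm 2 (Lp.aestronglyMeasurable f) ⇑φ

/-- The bounded multiplication operator `M_φ : L² → L²` for `φ ∈ L∞`. -/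
def mulCLM (φ : Linf) : L2 →L[ℂ] L2 :=
  LinearMap.mkContinuous
    { toFun := mulFun φ
      map_add' := by
        intro f g
        apply Lp.ext
        filter_upwards [mulFun_coe φ (f + g), mulFun_coe φ f, mulFun_coe φ g,
          Lp.coeFn_add f g, Lp.coeFn_add (mulFun φ f) (mulFun φ g)] with x h1 h2 h3 h4 h5
        simp only [Pi.smul_apply', Pi.add_apply] at *
        rw [h1, h5, h2, h3, h4]
        exact smul_add _ _ _
      map_smul' := by
        intro c f
        apply Lp.ext
        filter_upwards [mulFun_coe φ (c • f), mulFun_coe φ f,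
          Lp.coeFn_smul c f, Lp.coeFn_smul c (mulFun φ f)] with x h1 h2 h3 h4
        simp only [Pi.smul_apply', Pi.smul_apply, RingHom.id_apply] at *
        rw [h1, h4, h2, h3]
        exact smul_comm _ _ _ }
    ‖φ‖ (mulFun_norm_le φ)

/-- The image `a·K = {a f : f ∈ K}` of a subspace `K ⊆ L²` under multiplication by `a ∈ L∞`. -/
def smulSub (a : Linf) (K : Submodule ℂ L2) : Submodule ℂ L2 :=
  K.map (mulCLM a : L2 →ₗ[ℂ] L2)

/-- The Hardy space `H² = {f ∈ L² : f̂(n) = 0 for n < 0}`. -/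
def Hardy : Submodule ℂ L2 where
  carrier := {f | ∀ n : ℤ, n < 0 → fourierBasis.repr f n = 0}
  add_mem' := by
    intro f g hf hg n hn
    rw [map_add, lp.coeFn_add, Pi.add_apply, hf n hn, hg n hn, add_zero]
  zero_mem' := by
    intro n hn
    rw [map_zero, lp.coeFn_zero]
    rfl
  smul_mem' := by
    intro c f hf n hn
    rw [_root_.map_smul, lp.coeFn_smul, Pi.smul_apply, hf n hn, smul_zero]

lemma hardy_isClosed : IsClosed (Hardy : Set L2) := by
  have h : (Hardy : Set L2) =
      ⋂ n : {m : ℤ // m < 0}, {f : L2 | fourierBasis.repr f n.1 = 0} := by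
    ext f
    constructor
    · intro hf
      exact Set.mem_iInter.2 fun n => hf n.1 n.2
    · intro hf n hn
      exact Set.mem_iInter.1 hf ⟨n, hn⟩
  rw [h]
  refine isClosed_iInter fun n => isClosed_eq ?_ continuous_const
  have : (fun f : L2 => fourierBasis.repr f n.1) =
      fun f : L2 => (innerSL ℂ (fourierBasis n.1)) f := by
    funext f
    exact fourierBasis.repr_apply_apply f n.1
  rw [this]
  exact (innerSL ℂ (fourierBasis n.1)).continuous

instance : CompleteSpace Hardy := hardy_isClosed.completeSpace_coe

/-- The model space `K_θ = H² ⊖ θH² = H² ∩ (θH²)^⊥`. -/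
def modelSpace (θ : Linf) : Submodule ℂ L2 :=
  Hardy ⊓ (smulSub θ Hardy)ᗮ

instance (θ : Linf) : CompleteSpace (modelSpace θ) := by
  suffices hc : IsClosed (modelSpace θ : Set L2) from hc.completeSpace_coe
  have h : (modelSpace θ : Set L2) = (Hardy : Set L2) ∩ ((smulSub θ Hardy)ᗮ : Set L2) := rfl
  rw [h]
  exact hardy_isClosed.inter (smulSub θ Hardy).isClosed_orthogonal

/-- The generalized Toeplitz operator `T_φ^{H₁,H₂} = P_{H₂} M_φ |_{H₁}`. -/
def genToeplitz (φ : Linf) (H₁ H₂ : Submodule ℂ L2) [CompleteSpace H₂] : H₁ →L[ℂ] H₂ :=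
  H₂.orthogonalProjectionOnto.comp ((mulCLM φ).comp H₁.subtypeL)

/-- The orthogonal projection of `L²` onto `H`, viewed as an operator `L² → L²`. -/
def projL (H : Submodule ℂ L2) [CompleteSpace H] : L2 →L[ℂ] L2 :=
  H.subtypeL.comp H.orthogonalProjectionOnto

/-- `φ ∈ H∞`: all negative Fourier coefficients of `φ` vanish. -/
def IsHardyInf (φ : Linf) : Prop := ∀ n : ℤ, n < 0 → fourierCoeff (⇑φ) n = 0

/-- `θ` is an inner function: `θ ∈ H∞` and `|θ| = 1` a.e. on the circle. -/
def IsInner (θ : Linf) : Prop :=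
  IsHardyInf θ ∧ ∀ᵐ x ∂μH, ‖(θ : AddCircle (2 * Real.pi) → ℂ) x‖ = 1

/-- `a ∈ 𝒢H∞` with explicit inverse `b ∈ H∞`. -/
def GHinfPair (a b : Linf) : Prop := IsHardyInf a ∧ IsHardyInf b ∧ a * b = 1

/-- `a ∈ 𝒢H∞`: `a` is invertible in the algebra `H∞`. -/
def IsGHinf (a : Linf) : Prop := ∃ b, GHinfPair a b

/-- `b ∈ 𝒢H̄∞`: `b` is the conjugate of an element of `𝒢H∞`. -/
def IsGHinfBar (b : Linf) : Prop := ∃ c, IsGHinf c ∧ b = star c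

/-- `a ∈ 𝒢L∞` with explicit inverse `b`. -/
def GLinfPair (a b : Linf) : Prop := a * b = 1 ∧ b * a = 1

/-- `a ∈ 𝒢L∞`: `a` is invertible in the algebra `L∞`. -/
def IsGLinf (a : Linf) : Prop := ∃ b, GLinfPair a b

/-- The kernel of an operator between subspaces of `L²`, viewed as a subspace of `L²`. -/
def subKer {K₁ K₂ : Submodule ℂ L2} (T : K₁ →L[ℂ] K₂) : Submodule ℂ L2 :=
  (LinearMap.ker (T : K₁ →ₗ[ℂ] K₂)).map K₁.subtype

/-- The range of an operator between subspaces of `L²`, viewed as a subspace of `L²`. -/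
def subRan {K₁ K₂ : Submodule ℂ L2} (T : K₁ →L[ℂ] K₂) : Submodule ℂ L2 :=
  (LinearMap.range (T : K₁ →ₗ[ℂ] K₂)).map K₂.subtype

/-- The image of a subspace `S ⊆ K₁` under `T : K₁ → K₂`, viewed as a subspace of `L²`. -/
def opImage {K₁ K₂ : Submodule ℂ L2} (T : K₁ →L[ℂ] K₂) (S : Submodule ℂ K₁) :
    Submodule ℂ L2 :=
  (S.map (T : K₁ →ₗ[ℂ] K₂)).map K₂.subtype

section Antilinear

variable {E : Type*} [NormedAddCommGroup E] [InnerProductSpace ℂ E]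

/-- `C` is antilinear: `C(f + a g) = C f + ā C g`. -/
def IsAntilinearMap (C : E → E) : Prop :=
  ∀ (f g : E) (a : ℂ), C (f + a • g) = C f + (starRingEnd ℂ a) • C g

/-- `Cs` is the antilinear adjoint of `C`: `⟨C f, g⟩ = conj ⟨f, Cs g⟩`. -/
def IsAntilinearAdjointOf (C Cs : E → E) : Prop :=
  ∀ f g : E, (inner ℂ (C f) g : ℂ) = (starRingEnd ℂ) (inner ℂ f (Cs g) : ℂ)

/-- `C` is an antilinear unitary: it is antilinear and its antilinear adjoint is its inverse. -/
def IsAntilinearUnitary (C : E → E) : Prop :=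
  IsAntilinearMap C ∧ ∃ Cs : E → E, IsAntilinearAdjointOf C Cs ∧
    Function.LeftInverse Cs C ∧ Function.RightInverse Cs C

/-- `T` is complex selfadjoint with respect to `C` (with inverse `Cinv`): `C T C⁻¹ = T*`. -/
def IsComplexSelfadjointWith [CompleteSpace E] (T : E →L[ℂ] E) (C Cinv : E → E) : Prop :=
  ∀ f : E, C (T (Cinv f)) = ContinuousLinearMap.adjoint T f

end Antilinear

/-! ### Auxiliary lemmas for statement 7 -/

lemma Linf_coe_mul (a b : Linf) : ⇑(a * b) =ᵐ[μH] ⇑a • ⇑b :=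
  MemLp.coeFn_toLp _

lemma Linf_coe_one : ⇑(1 : Linf) =ᵐ[μH] fun _ => (1 : ℂ) :=
  MemLp.coeFn_toLp _

lemma Linf_coe_star (a : Linf) : ⇑(star a) =ᵐ[μH] fun x => (starRingEnd ℂ) (a x) :=
  MemLp.coeFn_toLp _

lemma mulCLM_coe (φ : Linf) (f : L2) : ⇑(mulCLM φ f) =ᵐ[μH] ⇑φ • ⇑f :=
  mulFun_coe φ f

lemma mulCLM_mul (a b : Linf) (f : L2) : mulCLM (a * b) f = mulCLM a (mulCLM b f) := by
  apply Lp.ext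
  filter_upwards [mulCLM_coe (a * b) f, mulCLM_coe a (mulCLM b f), mulCLM_coe b f,
    Linf_coe_mul a b] with x h1 h2 h3 h4
  rw [h1, h2, Pi.smul_apply', Pi.smul_apply', h3, Pi.smul_apply', h4, Pi.smul_apply']
  simp [smul_eq_mul, mul_assoc]

lemma mulCLM_one (f : L2) : mulCLM 1 f = f := by
  apply Lp.ext
  filter_upwards [mulCLM_coe 1 f, Linf_coe_one] with x h1 h2
  rw [h1, Pi.smul_apply', h2]
  simp

lemma mulCLM_cancel {a b : Linf} (h : b * a = 1) (f : L2) :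
    mulCLM b (mulCLM a f) = f := by
  rw [← mulCLM_mul, h, mulCLM_one]

lemma mulCLM_star_inner (a : Linf) (f g : L2) :
    (inner ℂ (mulCLM (star a) f) g : ℂ) = inner ℂ f (mulCLM a g) := by
  rw [MeasureTheory.L2.inner_def, MeasureTheory.L2.inner_def]
  apply integral_congr_ae
  filter_upwards [mulCLM_coe (star a) f, mulCLM_coe a g, Linf_coe_star a] with x h1 h2 h3
  rw [h1, h2, Pi.smul_apply', Pi.smul_apply', h3]
  simp only [RCLike.inner_apply, smul_eq_mul, map_mul, starRingEnd_self_apply]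
  ring

lemma mulCLM_star_inner' (a : Linf) (f g : L2) :
    (inner ℂ f (mulCLM (star a) g) : ℂ) = inner ℂ (mulCLM a f) g := by
  have := congrArg (starRingEnd ℂ) (mulCLM_star_inner a g f)
  rwa [inner_conj_symm, inner_conj_symm] at this

lemma mem_of_smulSub {a : Linf} {K H : Submodule ℂ L2} (h : smulSub a K = H) {f : L2}
    (hf : f ∈ K) : mulCLM a f ∈ H := by
  rw [← h]
  exact Submodule.mem_map_of_mem hf

lemma mem_of_smulSub_inv {a b : Linf} (hab : GLinfPair a b) {K H : Submodule ℂ L2}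
    (h : smulSub a K = H) {g : L2} (hg : g ∈ H) : mulCLM b g ∈ K := by
  rw [← h] at hg
  obtain ⟨f, hf, rfl⟩ := hg
  show mulCLM b (mulCLM a f) ∈ K
  rw [mulCLM_cancel hab.2]
  exact hf

lemma genToeplitz_apply_coe {a : Linf} {K H : Submodule ℂ L2} [CompleteSpace H] (f : K)
    (hmem : mulCLM a (f : L2) ∈ H) :
    (genToeplitz a K H f : L2) = mulCLM a (f : L2) := by
  have : genToeplitz a K H f = ⟨mulCLM a (f : L2), hmem⟩ :=
    Submodule.orthogonalProjectionOnto_mem_subspace_eq_self (⟨mulCLM a (f : L2), hmem⟩ : H)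
  rw [this]

/-- Theorem 2.13: if `a₁K₁ = H₁`, `a₂K₂ = H₂` with `a₁, a₂ ∈ 𝒢L∞`
and `φ = ā₂ ψ a₁`, then `T_φ^{K₁,K₂} = E T_ψ^{H₁,H₂} F` with `E = T_{ā₂}^{H₂,K₂}`,
`F = T_{a₁}^{K₁,H₁} = M_{a₁}|_{K₁}` bounded invertible; hence the two generalized
Toeplitz operators are equivalent. -/

theorem statement7 (H₁ H₂ K₁ K₂ : Submodule ℂ L2)
    [CompleteSpace H₁] [CompleteSpace H₂] [CompleteSpace K₁] [CompleteSpace K₂]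
    (a₁ b₁ a₂ b₂ : Linf) (h₁ : GLinfPair a₁ b₁) (h₂ : GLinfPair a₂ b₂)
    (hK₁ : smulSub a₁ K₁ = H₁) (hK₂ : smulSub a₂ K₂ = H₂)
    (φ ψ : Linf) (hφψ : φ = star a₂ * ψ * a₁) :
    genToeplitz φ K₁ K₂ =
      (genToeplitz (star a₂) H₂ K₂).comp
        ((genToeplitz ψ H₁ H₂).comp (genToeplitz a₁ K₁ H₁)) ∧
    (∀ f : K₁, (genToeplitz a₁ K₁ H₁ f : L2) = mulCLM a₁ (f : L2)) ∧
    (∃ E' : K₂ →L[ℂ] H₂,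
      (genToeplitz (star a₂) H₂ K₂).comp E' = ContinuousLinearMap.id ℂ K₂ ∧
      E'.comp (genToeplitz (star a₂) H₂ K₂) = ContinuousLinearMap.id ℂ H₂) ∧
    (∃ F' : H₁ →L[ℂ] K₁,
      (genToeplitz a₁ K₁ H₁).comp F' = ContinuousLinearMap.id ℂ H₁ ∧
      F'.comp (genToeplitz a₁ K₁ H₁) = ContinuousLinearMap.id ℂ K₁) := by
  obtain ⟨hab₁, hba₁⟩ := h₁
  obtain ⟨hab₂, hba₂⟩ := h₂
  have hmem₁ : ∀ f : K₁, mulCLM a₁ (f : L2) ∈ H₁ := fun f => mem_of_smulSub hK₁ f.2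
  have hmem₂ : ∀ f : K₂, mulCLM a₂ (f : L2) ∈ H₂ := fun f => mem_of_smulSub hK₂ f.2
  have hmem₁' : ∀ g : H₁, mulCLM b₁ (g : L2) ∈ K₁ :=
    fun g => mem_of_smulSub_inv ⟨hab₁, hba₁⟩ hK₁ g.2
  have hmem₂' : ∀ g : H₂, mulCLM b₂ (g : L2) ∈ K₂ :=
    fun g => mem_of_smulSub_inv ⟨hab₂, hba₂⟩ hK₂ g.2
  have hFcoe : ∀ f : K₁, (genToeplitz a₁ K₁ H₁ f : L2) = mulCLM a₁ (f : L2) :=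
    fun f => genToeplitz_apply_coe f (hmem₁ f)
  have hF'coe : ∀ g : H₁, (genToeplitz b₁ H₁ K₁ g : L2) = mulCLM b₁ (g : L2) :=
    fun g => genToeplitz_apply_coe g (hmem₁' g)
  have hF₂coe : ∀ f : K₂, (genToeplitz a₂ K₂ H₂ f : L2) = mulCLM a₂ (f : L2) :=
    fun f => genToeplitz_apply_coe f (hmem₂ f)
  have hGcoe : ∀ g : H₂, (genToeplitz b₂ H₂ K₂ g : L2) = mulCLM b₂ (g : L2) :=
    fun g => genToeplitz_apply_coe g (hmem₂' g)
  -- E is the adjoint of the multiplication operator T_{a₂}^{K₂,H₂}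
  have hEadj : genToeplitz (star a₂) H₂ K₂ =
      ContinuousLinearMap.adjoint (genToeplitz a₂ K₂ H₂) := by
    rw [ContinuousLinearMap.eq_adjoint_iff]
    intro g f
    have h1 : (inner ℂ (genToeplitz (star a₂) H₂ K₂ g) f : ℂ)
        = inner ℂ (mulCLM (star a₂) (g : L2)) (f : L2) := by
      show (inner ℂ (K₂.orthogonalProjectionOnto (mulCLM (star a₂) (g : L2))) f : ℂ) = _
      exact Submodule.inner_orthogonalProjectionOnto_eq_of_mem_right (K := K₂) f _
    rw [h1, mulCLM_star_inner]
    rw [show (inner ℂ g (genToeplitz a₂ K₂ H₂ f) : ℂ)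
        = inner ℂ (g : L2) ((genToeplitz a₂ K₂ H₂ f : L2)) from rfl, hF₂coe f]
  refine ⟨?_, hFcoe, ?_, ?_⟩
  · -- the factorization
    refine ContinuousLinearMap.ext fun f => ?_
    apply ext_inner_left ℂ
    intro k
    have lhs : (inner ℂ k (genToeplitz φ K₁ K₂ f) : ℂ)
        = inner ℂ (k : L2) (mulCLM φ (f : L2)) := by
      show (inner ℂ k (K₂.orthogonalProjectionOnto (mulCLM φ (f : L2))) : ℂ) = _
      exact Submodule.inner_orthogonalProjectionOnto_eq_of_mem_left (K := K₂) k _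
    have hφ : mulCLM φ (f : L2)
        = mulCLM (star a₂) (mulCLM ψ (mulCLM a₁ (f : L2))) := by
      rw [hφψ, mulCLM_mul, mulCLM_mul]
    set u : L2 := mulCLM ψ ((genToeplitz a₁ K₁ H₁ f : L2)) with hu
    have rhs1 : (inner ℂ k (((genToeplitz (star a₂) H₂ K₂).comp
        ((genToeplitz ψ H₁ H₂).comp (genToeplitz a₁ K₁ H₁))) f) : ℂ)
        = inner ℂ (k : L2)
            (mulCLM (star a₂) ((genToeplitz ψ H₁ H₂ (genToeplitz a₁ K₁ H₁ f) : L2))) := by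
      show (inner ℂ k (K₂.orthogonalProjectionOnto
          (mulCLM (star a₂) ((genToeplitz ψ H₁ H₂ (genToeplitz a₁ K₁ H₁ f) : L2)))) : ℂ) = _
      exact Submodule.inner_orthogonalProjectionOnto_eq_of_mem_left (K := K₂) k _
    have rhs2 : (inner ℂ (k : L2)
          (mulCLM (star a₂) ((genToeplitz ψ H₁ H₂ (genToeplitz a₁ K₁ H₁ f) : L2))) : ℂ)
        = inner ℂ (mulCLM a₂ (k : L2))
            ((genToeplitz ψ H₁ H₂ (genToeplitz a₁ K₁ H₁ f) : L2)) :=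
      mulCLM_star_inner' a₂ _ _
    have rhs3 : (inner ℂ (mulCLM a₂ (k : L2))
          ((genToeplitz ψ H₁ H₂ (genToeplitz a₁ K₁ H₁ f) : L2)) : ℂ)
        = inner ℂ (mulCLM a₂ (k : L2)) u := by
      set w : H₂ := ⟨mulCLM a₂ (k : L2), hmem₂ k⟩ with hw
      have step : (inner ℂ w (genToeplitz ψ H₁ H₂ (genToeplitz a₁ K₁ H₁ f)) : ℂ)
          = inner ℂ (w : L2) u := by
        show (inner ℂ w (H₂.orthogonalProjectionOnto u) : ℂ) = _
        exact Submodule.inner_orthogonalProjectionOnto_eq_of_mem_left (K := H₂) w u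
      exact step
    have rhs4 : (inner ℂ (mulCLM a₂ (k : L2)) u : ℂ)
        = inner ℂ (k : L2) (mulCLM (star a₂) u) := (mulCLM_star_inner' a₂ _ _).symm
    rw [lhs, rhs1, rhs2, rhs3, rhs4, hu, hFcoe f, ← hφ]
  · -- E is invertible
    refine ⟨ContinuousLinearMap.adjoint (genToeplitz b₂ H₂ K₂), ?_, ?_⟩
    · have hGF : (genToeplitz b₂ H₂ K₂).comp (genToeplitz a₂ K₂ H₂)
          = ContinuousLinearMap.id ℂ K₂ := by
        refine ContinuousLinearMap.ext fun f => Subtype.ext ?_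
        show (genToeplitz b₂ H₂ K₂ (genToeplitz a₂ K₂ H₂ f) : L2) = (f : L2)
        rw [hGcoe, hF₂coe, mulCLM_cancel hba₂]
      rw [hEadj, ← ContinuousLinearMap.adjoint_comp, hGF, ContinuousLinearMap.adjoint_id]
    · have hFG : (genToeplitz a₂ K₂ H₂).comp (genToeplitz b₂ H₂ K₂)
          = ContinuousLinearMap.id ℂ H₂ := by
        refine ContinuousLinearMap.ext fun g => Subtype.ext ?_
        show (genToeplitz a₂ K₂ H₂ (genToeplitz b₂ H₂ K₂ g) : L2) = (g : L2)
        rw [hF₂coe, hGcoe, mulCLM_cancel hab₂]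
      rw [hEadj, ← ContinuousLinearMap.adjoint_comp, hFG, ContinuousLinearMap.adjoint_id]
  · -- F is invertible
    refine ⟨genToeplitz b₁ H₁ K₁, ?_, ?_⟩
    · refine ContinuousLinearMap.ext fun g => Subtype.ext ?_
      show (genToeplitz a₁ K₁ H₁ (genToeplitz b₁ H₁ K₁ g) : L2) = (g : L2)
      rw [hFcoe, hF'coe, mulCLM_cancel hab₁]
    · refine ContinuousLinearMap.ext fun f => Subtype.ext ?_
      show (genToeplitz b₁ H₁ K₁ (genToeplitz a₁ K₁ H₁ f) : L2) = (f : L2)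
      rw [hF'coe, hFcoe, mulCLM_cancel hba₁]
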